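/- Let ε > 0 and let x, y : [0,T] → ℝ (T > 0, or T = ∞) be differentiable functions such that y'(t) = −ε for all t, and x'(t) = x(t)² − y(t) for every t with y(t) < x(t)² (no condition is imposed on x' at times where y(t) ≥ x(t)²). If y(0) < x(0)², then y(t) < x(t)² for all t ∈ [0,T]. In other words, for the piecewise-defined fold system the complement ℝ² \ C₀ of the two-dimensional critical manifold is forward invariant, regardless of the choice of the vector field h on C₀. -/

import Mathlib

/-- For the fold system with two-dimensional critical manifold
`C₀ = {(x,y) : y ≥ x²}`, the complement `ℝ² \ C₀` is forward invariant:
if `y' = -ε` everywhere and `x' = x² - y` whenever `y < x²` (no condition on `x'`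
where `y ≥ x²`), and `y 0 < (x 0)²`, then `y t < (x t)²` for all `t ∈ [0,T]`. -/
theorem fold_complement_forward_invariant
    (ε T : ℝ) (hε : 0 < ε) (hT : 0 < T) (x y : ℝ → ℝ)
    (hxdiff : ∀ t ∈ Set.Icc (0 : ℝ) T, DifferentiableAt ℝ x t)
    (hy : ∀ t ∈ Set.Icc (0 : ℝ) T, HasDerivAt y (-ε) t)
    (hx : ∀ t ∈ Set.Icc (0 : ℝ) T, y t < (x t) ^ 2 →
      HasDerivAt x ((x t) ^ 2 - y t) t)
    (h0 : y 0 < (x 0) ^ 2) :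
    ∀ t ∈ Set.Icc (0 : ℝ) T, y t < (x t) ^ 2 := by
  set g : ℝ → ℝ := fun t => x t ^ 2 - y t with hg
  have hgpos0 : 0 < g 0 := by simp [hg]; linarith
  -- continuity of g on Icc
  have hgcont : ContinuousOn g (Set.Icc 0 T) := by
    intro t ht
    exact (((hxdiff t ht).pow 2).sub (hy t ht).differentiableAt).continuousAt.continuousWithinAt
  -- derivative of g where g > 0
  have hgderiv : ∀ t ∈ Set.Icc (0 : ℝ) T, 0 < g t →
      HasDerivAt g (2 * x t * g t + ε) t := by
    intro t ht hgt
    have hyx : y t < x t ^ 2 := by simp [hg] at hgt; linarith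
    have hx' := hx t ht hyx
    have hy' := hy t ht
    have := (hx'.pow 2).sub hy'
    convert this using 1
    show 2 * x t * (x t ^ 2 - y t) + ε = _
    ring
    all_goals rfl
  -- set of bad times
  set S : Set ℝ := Set.Icc 0 T ∩ g ⁻¹' Set.Iic 0 with hS
  by_cases hne : S.Nonempty
  · exfalso
    have hSclosed : IsClosed S :=
      hgcont.preimage_isClosed_of_isClosed isClosed_Icc isClosed_Iic
    have hSbdd : BddBelow S := ⟨0, fun s hs => hs.1.1⟩
    set t₀ := sInf S with ht₀def
    have ht₀S : t₀ ∈ S := hSclosed.csInf_mem hne hSbdd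
    have ht₀Icc : t₀ ∈ Set.Icc (0:ℝ) T := ht₀S.1
    have hgt₀ : g t₀ ≤ 0 := ht₀S.2
    have ht₀pos : 0 < t₀ := by
      rcases lt_or_eq_of_le ht₀Icc.1 with h | h
      · exact h
      · exfalso; rw [← h] at hgt₀; linarith
    -- g positive before t₀
    have hbefore : ∀ s ∈ Set.Ico (0:ℝ) t₀, 0 < g s := by
      intro s hs
      by_contra hcon
      push_neg at hcon
      have hsS : s ∈ S := ⟨⟨hs.1, le_trans hs.2.le ht₀Icc.2⟩, hcon⟩
      exact absurd (csInf_le hSbdd hsS) (not_le.mpr hs.2)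
    -- bound on x on [0, t₀]
    obtain ⟨M, hM⟩ := (isCompact_Icc (a := (0:ℝ)) (b := t₀)).exists_bound_of_continuousOn
      (fun s hs => ((hxdiff s ⟨hs.1, le_trans hs.2 ht₀Icc.2⟩).continuousAt).continuousWithinAt)
    have hM0 : 0 ≤ M := le_trans (norm_nonneg _) (hM t₀ ⟨ht₀pos.le, le_refl _⟩)
    set c : ℝ := ε / (2 * M + 1) with hc
    have hcpos : 0 < c := div_pos hε (by linarith)
    -- continuity at t₀: find δ
    have hct₀ : ContinuousWithinAt g (Set.Icc 0 T) t₀ := hgcont t₀ ht₀Icc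
    have hev : g ⁻¹' Set.Iio c ∈ nhdsWithin t₀ (Set.Icc 0 T) :=
      hct₀ (Iio_mem_nhds (lt_of_le_of_lt hgt₀ hcpos))
    rw [Metric.mem_nhdsWithin_iff] at hev
    obtain ⟨δ, hδpos, hδ⟩ := hev
    set a : ℝ := max (t₀ - δ / 2) (t₀ / 2) with ha
    have ha0 : 0 ≤ a := le_trans (by linarith) (le_max_right _ _)
    have halt : a < t₀ := max_lt (by linarith) (by linarith)
    have hsub : Set.Icc a t₀ ⊆ Set.Icc 0 T := fun s hs =>
      ⟨le_trans ha0 hs.1, le_trans hs.2 ht₀Icc.2⟩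
    have hsmall : ∀ s ∈ Set.Icc a t₀, g s < c := by
      intro s hs
      have h1 : t₀ - δ / 2 ≤ s := le_trans (le_max_left _ _) hs.1
      have hdist : dist s t₀ < δ := by
        rw [Real.dist_eq, abs_lt]
        constructor <;> linarith [hs.2]
      exact hδ ⟨hdist, hsub hs⟩
    -- strict monotonicity of g on [a, t₀]
    have hmono : StrictMonoOn g (Set.Icc a t₀) := by
      apply strictMonoOn_of_deriv_pos (convex_Icc a t₀) (hgcont.mono hsub)
      intro s hs
      rw [interior_Icc] at hs
      have hsIcc : s ∈ Set.Icc (0:ℝ) T := hsub ⟨hs.1.le, hs.2.le⟩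
      have hgs : 0 < g s := hbefore s ⟨le_trans ha0 hs.1.le, hs.2⟩
      have hd := hgderiv s hsIcc hgs
      rw [hd.deriv]
      have hgsc : g s < c := hsmall s ⟨hs.1.le, hs.2.le⟩
      have hxb : |x s| ≤ M := by
        have := hM s ⟨le_trans ha0 hs.1.le, hs.2.le⟩
        simpa [Real.norm_eq_abs] using this
      have : |2 * x s * g s| ≤ 2 * M * g s := by
        rw [abs_mul, abs_mul]
        have : |(2:ℝ)| = 2 := by norm_num
        rw [this, abs_of_pos hgs]
        nlinarith [abs_nonneg (x s)]
      have h2 : 2 * M * g s < 2 * M * c + c := by nlinarith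
      have h3 : (2 * M + 1) * c = ε := by
        rw [hc]; field_simp [show (2 * M + 1) ≠ 0 by linarith]
      nlinarith [abs_le.mp ‹|2 * x s * g s| ≤ 2 * M * g s›]
    have hga : 0 < g a := hbefore a ⟨ha0, halt⟩
    have : g a < g t₀ := hmono ⟨le_refl _, halt.le⟩ ⟨halt.le, le_refl _⟩ halt
    linarith
  · intro t ht
    rw [Set.not_nonempty_iff_eq_empty] at hne
    by_contra hcon
    push_neg at hcon
    have : t ∈ S := ⟨ht, by simp [hg]; linarith⟩
    rw [hne] at this
    exact this
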